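/- Let C be a left-cancellative monoid and S a subset such that S ∪ {1} generates C and every element of (S ∪ {1})² admits an S-normal decomposition of length two. Then every element of C admits an S-normal decomposition (i.e., S is a Garside family). -/

import Mathlib

/-- A pair `(g1, g2)` is `S`-greedy. -/
def SGreedy {M : Type*} [Monoid M] (S : Set M) (g1 g2 : M) : Prop :=
  ∀ a ∈ S, ∀ f : M, (∃ z, a * z = f * g1 * g2) → ∃ z, a * z = f * g1

/-- A list is `S`-normal. -/
def SNormal {M : Type*} [Monoid M] (S : Set M) (l : List M) : Prop :=
  l.Chain' (SGreedy S) ∧ ∀ x ∈ l, x ∈ S ∨ x = 1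

/-- Left-multiplication lemma: multiplying a normal list by one generator on the
left preserves the existence of a normal decomposition, with control of the head. -/
theorem leftmul_aux {M : Type*} [Monoid M] (S : Set M)
    (hsq : ∀ x y : M, (x ∈ S ∨ x = 1) → (y ∈ S ∨ y = 1) →
      ∃ b1 b2 : M, (b1 ∈ S ∨ b1 = 1) ∧ (b2 ∈ S ∨ b2 = 1) ∧
        SGreedy S b1 b2 ∧ b1 * b2 = x * y) :
    ∀ l : List M, SNormal S l → ∀ f : M, (f ∈ S ∨ f = 1) →
      ∃ l' : List M, SNormal S l' ∧ l'.prod = f * l.prod ∧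
        ∃ r, l'.headD 1 * r = f * l.headD 1 := by
  intro l
  induction l with
  | nil =>
    intro _ f hf
    exact ⟨[f], ⟨List.isChain_singleton f, by simpa using hf⟩, by simp, 1, by simp⟩
  | cons g t ih =>
    intro hn f hf
    obtain ⟨hchain, hmem⟩ := hn
    have hg : g ∈ S ∨ g = 1 := hmem g List.mem_cons_self
    obtain ⟨a1, f1, ha1, hf1, hgr, heq⟩ := hsq f g hf hg
    have hnt : SNormal S t := ⟨hchain.tail, fun x hx => hmem x (List.mem_cons_of_mem _ hx)⟩
    obtain ⟨l', ⟨hc', hm'⟩, hp', r, hr⟩ := ih hnt f1 hf1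
    refine ⟨a1 :: l', ⟨?_, ?_⟩, ?_, f1, ?_⟩
    · unfold List.Chain'; rw [List.isChain_cons]
      refine ⟨?_, hc'⟩
      intro y hy
      have hyhead : l'.headD 1 = y := by
        cases l' with
        | nil => simp at hy
        | cons z zs => simp_all
      intro a ha c hz
      obtain ⟨z, hz⟩ := hz
      -- a * (z * r) = c * f * g * (t.headD 1)
      have key : a * (z * r) = c * f * g * t.headD 1 := by
        have : a * (z * r) = c * a1 * (y * r) := by
          rw [← mul_assoc, hz, mul_assoc]
        rw [this, ← hyhead, hr]
        simp only [← mul_assoc]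
        rw [mul_assoc c a1 f1, heq, ← mul_assoc]
      have step1 : ∃ z1, a * z1 = c * a1 * f1 := by
        have hcaf : c * a1 * f1 = c * f * g := by
          rw [mul_assoc c a1 f1, heq, ← mul_assoc]
        cases t with
        | nil =>
          refine ⟨z * r, ?_⟩
          rw [key]; simp [hcaf]
        | cons g2 rest =>
          have hgg2 : SGreedy S g g2 := (List.isChain_cons_cons.mp hchain).1
          have := hgg2 a ha (c * f) ⟨z * r, by simpa using key⟩
          rw [hcaf]
          exact this
      exact hgr a ha c step1
    · intro x hx
      rcases List.mem_cons.mp hx with h | h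
      · exact h ▸ ha1
      · exact hm' x h
    · simp only [List.prod_cons, hp']
      rw [← mul_assoc, heq, mul_assoc]
    · simpa using heq

/-- If `S ∪ {1}` generates a left-cancellative right-Noetherian monoid with no
nontrivial invertible elements, and every element of `(S ∪ {1})²` admits an
`S`-normal decomposition of length two, then every element admits an
`S`-normal decomposition: `S` is a Garside family. -/
theorem garside_family_of_length_two (M : Type*) [Monoid M]
    (hcancel : ∀ f g g' : M, f * g = f * g' → g = g')
    (hnu : ∀ x y : M, x * y = 1 → x = 1 ∧ y = 1)
    (hnoeth : WellFounded (fun g h : M => ∃ f, ¬ IsUnit f ∧ h = f * g))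
    (S : Set M)
    (hgen : ∀ g : M, ∃ l : List M, (∀ x ∈ l, x ∈ S ∨ x = 1) ∧ l.prod = g)
    (hsq : ∀ x y : M, (x ∈ S ∨ x = 1) → (y ∈ S ∨ y = 1) →
      ∃ b1 b2 : M, (b1 ∈ S ∨ b1 = 1) ∧ (b2 ∈ S ∨ b2 = 1) ∧
        SGreedy S b1 b2 ∧ b1 * b2 = x * y) :
    ∀ g : M, ∃ l : List M, SNormal S l ∧ l.prod = g := by
  intro g
  obtain ⟨l, hl, hprod⟩ := hgen g
  subst hprod
  clear hcancel hnu hnoeth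
  induction l with
  | nil => exact ⟨[], ⟨List.isChain_nil, by simp⟩, rfl⟩
  | cons f t ih =>
    have hf : f ∈ S ∨ f = 1 := hl f List.mem_cons_self
    obtain ⟨l', hn', hp'⟩ := ih (fun x hx => hl x (List.mem_cons_of_mem _ hx))
    obtain ⟨l'', hn'', hp'', _⟩ := leftmul_aux S hsq l' hn' f hf
    exact ⟨l'', hn'', by rw [hp'', hp']; simp⟩
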